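/- For a binary form f ∈ K[x,y]_d and distinct linear forms ℓ_1,…,ℓ_r ∈ K[x,y]_1, there exist coefficients α_i ∈ K with f = Σ_{i=1}^r α_i ℓ_i^d if and only if the differential operator ℓ_1^⊥ ∘ ⋯ ∘ ℓ_r^⊥ annihilates f. -/

import Mathlib

open MvPolynomial

noncomputable section

/-- The Zariski closure of a subset of the affine space `σ → K`. -/
def zClosure {K : Type} [Field K] {σ : Type} [Fintype σ] [DecidableEq σ]
    (S : Set (σ → K)) : Set (σ → K) :=
  {x | ∀ p : MvPolynomial σ K, (∀ y ∈ S, eval y p = 0) → eval x p = 0}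

/-- A subset of affine space is Zariski closed if it equals its Zariski closure. -/
def zClosed {K : Type} [Field K] {σ : Type} [Fintype σ] [DecidableEq σ]
    (S : Set (σ → K)) : Prop :=
  zClosure S = S

/-- Irreducibility of a subset of affine space in the Zariski topology,
tested against the basic open sets. -/
def zIrreducible {K : Type} [Field K] {σ : Type} [Fintype σ] [DecidableEq σ]
    (S : Set (σ → K)) : Prop :=
  S.Nonempty ∧ ∀ p q : MvPolynomial σ K,
    (∀ x ∈ S, eval x p = 0 ∨ eval x q = 0) →
    (∀ x ∈ S, eval x p = 0) ∨ (∀ x ∈ S, eval x q = 0)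

/-- There is a strictly increasing chain of `m+1` irreducible Zariski-closed
subsets contained in `S`. -/
def zChain {K : Type} [Field K] {σ : Type} [Fintype σ] [DecidableEq σ]
    (S : Set (σ → K)) (m : ℕ) : Prop :=
  ∃ c : Fin (m+1) → Set (σ → K),
    (∀ i, zIrreducible (c i) ∧ zClosed (c i) ∧ c i ⊆ S) ∧
    ∀ i j : Fin (m+1), i < j → c i ⊂ c j

/-- `S` has (Krull) dimension `m` in the Zariski topology. -/
def zDimEq {K : Type} [Field K] {σ : Type} [Fintype σ] [DecidableEq σ]
    (S : Set (σ → K)) (m : ℕ) : Prop :=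
  zChain S m ∧ ¬ zChain S (m+1)

/-- The (embedded, affine) Zariski tangent space to `S` at `a`: the common kernel of the
differentials at `a` of all polynomials vanishing on `S`. -/
def zTangentAt {K : Type} [Field K] {σ : Type} [Fintype σ] [DecidableEq σ]
    (S : Set (σ → K)) (a : σ → K) : Set (σ → K) :=
  {v | ∀ p : MvPolynomial σ K, (∀ y ∈ S, eval y p = 0) →
        ∑ i : σ, eval a (pderiv i p) * v i = 0}

/-- Dimension of the Zariski tangent space at a point. -/
def zTangentDim {K : Type} [Field K] {σ : Type} [Fintype σ] [DecidableEq σ]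
    (S : Set (σ → K)) (a : σ → K) : ℕ :=
  Module.finrank K (Submodule.span K (zTangentAt S a))

/-- The binary form of degree `r` with coefficient vector `a`. -/
def binForm {K : Type} [CommSemiring K] (r : ℕ) (a : Fin (r+1) → K) :
    MvPolynomial (Fin 2) K :=
  ∑ i : Fin (r+1), C (a i) * X 0 ^ (r - (i : ℕ)) * X 1 ^ (i : ℕ)

/-- The linear binary form `u·x + v·y`. -/
def linForm {K : Type} [CommSemiring K] (u v : K) : MvPolynomial (Fin 2) K :=
  C u * X 0 + C v * X 1

/-- The affine cone over the coincident root locus `Δ_λ ⊆ ℙ^r`, in coefficient coordinates: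
scalar multiples of forms `∏ ℓ_i ^ λ_i`. -/
def crlCone (r n : ℕ) (lam : Fin n → ℕ) : Set (Fin (r+1) → ℂ) :=
  {a | ∃ (t : ℂ) (u v : Fin n → ℂ),
    binForm r a = C t * ∏ i, (linForm (u i) (v i)) ^ lam i}

/-- `lam` is a partition of `r` of length `n` (all parts positive). -/
def isPartitionOf (r n : ℕ) (lam : Fin n → ℕ) : Prop :=
  (∀ i, 1 ≤ lam i) ∧ ∑ i, lam i = r

/-- The multiplicity `m_j` of the part `j` in the partition `lam`. -/
def multOf {n : ℕ} (lam : Fin n → ℕ) (jj : ℕ) : ℕ :=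
  (Finset.univ.filter fun i => lam i = jj).card

/-- The differential operator of degree `s` with coefficient vector `b`, i.e.
`∑ b_i ∂x^(s-i) ∂y^i`, applied to `f`. -/
def diffOp {K : Type} [CommSemiring K] (s : ℕ) (b : Fin (s+1) → K)
    (f : MvPolynomial (Fin 2) K) : MvPolynomial (Fin 2) K :=
  ∑ i : Fin (s+1), b i •
    ((fun g => pderiv (0 : Fin 2) g)^[s - (i : ℕ)]
      (((fun g => pderiv (1 : Fin 2) g)^[(i : ℕ)]) f))

/-- The apolarity pairing between a degree-`d` operator (coefficients `h`) and a
degree-`d` form (coefficients `a`). -/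
def apolarPair (d : ℕ) (h a : Fin (d+1) → ℂ) : ℂ :=
  eval (fun _ => (0 : ℂ)) (diffOp d h (binForm d a))

/-- The cone over the dual variety of the cone `S ⊆ ℂ^(m+1)` (with `k` the dimension of the
cone `S`, used to select smooth points): closure of the set of hyperplanes, written in dual
coordinates via the apolarity pairing, containing an embedded tangent space at a smooth point. -/
def dualConeOf (m : ℕ) (S : Set (Fin (m+1) → ℂ)) (k : ℕ) : Set (Fin (m+1) → ℂ) :=
  zClosure {h | h ≠ 0 ∧ ∃ a ∈ S, a ≠ 0 ∧ zTangentDim S a = k ∧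
      ∀ v ∈ zTangentAt S a, apolarPair m h v = 0}

/-- The row span of a matrix, as a subspace of `ℂ^m`. -/
def rowSpan {k m : ℕ} (M : Matrix (Fin k) (Fin m) ℂ) : Submodule ℂ (Fin m → ℂ) :=
  Submodule.span ℂ (Set.range fun i => M i)

/-- The (redundant) Plücker coordinate vector of the row span of `M`: all maximal minors. -/
def plucker {k m : ℕ} (M : Matrix (Fin k) (Fin m) ℂ) : (Fin k → Fin m) → ℂ :=
  fun s => (M.submatrix id s).det

/-- The degree-`s` component of the apolar ideal of the degree-`d` form with
coefficients `a`, as a subset of the coefficient space of operators. -/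
def apolarSet (d s : ℕ) (a : Fin (d+1) → ℂ) : Set (Fin (s+1) → ℂ) :=
  {b | diffOp s b (binForm d a) = 0}

/-- The (pre-closure) cone, in Plücker coordinates, over the `j`-th higher associated variety
`CH_j(S)`: spans of `k`-row matrices whose row space contains a smooth point `x` of the cone
`S` (`dimS` = dimension of the cone `S`) and meets the tangent space at `x` in projective
dimension at least `j`. -/
def smoothCHCone (m : ℕ) (S : Set (Fin (m+1) → ℂ)) (dimS k j : ℕ) :
    Set ((Fin k → Fin (m+1)) → ℂ) :=
  {u | ∃ M : Matrix (Fin k) (Fin (m+1)) ℂ, u = plucker M ∧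
    Module.finrank ℂ (rowSpan M) = k ∧
    ∃ x, x ≠ 0 ∧ x ∈ S ∧ zTangentDim S x = dimS ∧ x ∈ rowSpan M ∧
      j + 1 ≤ Module.finrank ℂ ↥(rowSpan M ⊓ Submodule.span ℂ (zTangentAt S x))}

/-- The (pre-closure) cone, in Plücker coordinates, over `Ξ_0(S)`: spans of `k`-row matrices
whose row space meets the cone `S` nontrivially. -/
def meetCone (m : ℕ) (S : Set (Fin (m+1) → ℂ)) (k : ℕ) :
    Set ((Fin k → Fin (m+1)) → ℂ) :=
  {u | ∃ M : Matrix (Fin k) (Fin (m+1)) ℂ, u = plucker M ∧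
    Module.finrank ℂ (rowSpan M) = k ∧ ∃ x, x ≠ 0 ∧ x ∈ S ∧ x ∈ rowSpan M}

/-- The preimage under the apolar map `Ψ_{d,s}` of a subset `T` of the Grassmannian
(in Plücker coordinates) of `(k-1)`-projective-dimensional subspaces of `ℙ(D_s)`. -/
def apolarPull (d s k : ℕ) (T : Set ((Fin k → Fin (s+1)) → ℂ)) : Set (Fin (d+1) → ℂ) :=
  {a | ∃ M : Matrix (Fin k) (Fin (s+1)) ℂ,
    rowSpan M = Submodule.span ℂ (apolarSet d s a) ∧
    Module.finrank ℂ (rowSpan M) = k ∧ plucker M ∈ T}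

/-- The Waring rank over `K` of a binary form: the least `r` such that `f` is a sum of `r`
scalar multiples of `d`-th powers of linear forms. -/
def waringRank {K : Type} [Field K] (d : ℕ) (f : MvPolynomial (Fin 2) K) : ℕ :=
  sInf {r | ∃ (α u v : Fin r → K), f = ∑ i, α i • (linForm (u i) (v i)) ^ d}

/-- The set of coefficient vectors of real binary forms of degree `d` of real rank `r`. -/
def realRankSet (d r : ℕ) : Set (Fin (d+1) → ℝ) :=
  {a | waringRank d (binForm d a) = r}

/-- `R_{d,r}`: the interior, in the Euclidean topology, of the set of real binary forms of
degree `d` and real rank `r`. -/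
def Rdr (d r : ℕ) : Set (Fin (d+1) → ℝ) := interior (realRankSet d r)

/-- The topological boundary of `R_{d,r}`: the closure of `R_{d,r}` minus the interior of
the closure. -/
def topBoundary (d r : ℕ) : Set (Fin (d+1) → ℝ) :=
  closure (Rdr d r) \ interior (closure (Rdr d r))

/-- The algebraic boundary `∂_alg(R_{d,r})`: the Zariski closure over `ℂ` of the topological
boundary of `R_{d,r}`. -/
def algBoundary (d r : ℕ) : Set (Fin (d+1) → ℂ) :=
  zClosure ((fun a i => ((a i : ℝ) : ℂ)) '' topBoundary d r)


namespace ApolarAux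

variable {K : Type} [Field K] [CharZero K]

lemma deg2 (s : Fin 2 →₀ ℕ) : s.degree = s 0 + s 1 := by
  rw [Finsupp.degree_apply, Finset.sum_subset (Finset.subset_univ s.support)
    (fun i _ hi => Finsupp.notMem_support_iff.mp hi)]
  exact Fin.sum_univ_two s

lemma hom_degree {f : MvPolynomial (Fin 2) K} {d : ℕ} (hf : f.IsHomogeneous d)
    {s : Fin 2 →₀ ℕ} (hs : coeff s f ≠ 0) : s 0 + s 1 = d := by
  rw [← deg2, Finsupp.degree_eq_weight_one]
  exact hf hs

lemma hom_pderiv {f : MvPolynomial (Fin 2) K} {d : ℕ} (hf : f.IsHomogeneous d)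
    (i : Fin 2) : (pderiv i f).IsHomogeneous (d - 1) := by
  conv_lhs => rw [f.as_sum]
  rw [map_sum]
  apply MvPolynomial.IsHomogeneous.sum
  intro s hs
  rw [pderiv_monomial]
  rcases Nat.eq_zero_or_pos (s i) with h | h
  · rw [h]; simp only [Nat.cast_zero, mul_zero]
    rw [(monomial _).map_zero]
    exact isHomogeneous_zero _ _ _
  · apply isHomogeneous_monomial
    rw [deg2, Finsupp.tsub_apply, Finsupp.tsub_apply, Finsupp.single_apply,
      Finsupp.single_apply]
    have := hom_degree hf (mem_support_iff.mp hs)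
    fin_cases i <;> simp_all <;> omega

lemma X_mul_pderiv_monomial (j : Fin 2) (s : Fin 2 →₀ ℕ) (c : K) :
    X j * pderiv j (monomial s c) = monomial s (c * s j) := by
  rw [pderiv_monomial]
  rcases Nat.eq_zero_or_pos (s j) with h | h
  · rw [h]; simp
  · have hs' : Finsupp.single j 1 + (s - Finsupp.single j 1) = s := by
      ext k
      simp only [Finsupp.add_apply, Finsupp.tsub_apply, Finsupp.single_apply]
      by_cases hk : j = k
      · subst hk; simp only [eq_self_iff_true, if_true]; omega
      · simp [hk]
    rw [X, monomial_mul, one_mul, hs']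

lemma euler {f : MvPolynomial (Fin 2) K} {d : ℕ} (hf : f.IsHomogeneous d) :
    X 0 * pderiv (0 : Fin 2) f + X 1 * pderiv (1 : Fin 2) f = d • f := by
  conv_lhs => rw [f.as_sum]
  conv_rhs => rw [f.as_sum]
  rw [map_sum (pderiv (0 : Fin 2)), map_sum (pderiv (1 : Fin 2)), Finset.mul_sum,
    Finset.mul_sum, Finset.smul_sum, ← Finset.sum_add_distrib]
  refine Finset.sum_congr rfl fun s hs => ?_
  rw [X_mul_pderiv_monomial, X_mul_pderiv_monomial, smul_monomial,
    ← (monomial s).map_add, ← mul_add]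
  congr 1
  rw [← Nat.cast_add, hom_degree hf (mem_support_iff.mp hs), nsmul_eq_mul, mul_comm]

lemma eq_zero_of_pderiv {f : MvPolynomial (Fin 2) K} {d : ℕ} (hf : f.IsHomogeneous d)
    (hd : d ≠ 0) (h0 : pderiv (0 : Fin 2) f = 0) (h1 : pderiv (1 : Fin 2) f = 0) :
    f = 0 := by
  have h := euler hf
  rw [h0, h1, mul_zero, mul_zero, add_zero, ← Nat.cast_smul_eq_nsmul K] at h
  rcases smul_eq_zero.mp h.symm with h | h
  · exact absurd h (Nat.cast_ne_zero.mpr hd)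
  · exact h

lemma pderiv0_linForm (u v : K) : pderiv (0 : Fin 2) (linForm u v) = C u := by
  simp [linForm, pderiv_C_mul]

lemma pderiv1_linForm (u v : K) : pderiv (1 : Fin 2) (linForm u v) = C v := by
  simp [linForm, pderiv_C_mul]

lemma pderiv0_smul_pow (u v c : K) (n : ℕ) :
    pderiv (0 : Fin 2) (c • linForm u v ^ n) = (c * n * u) • linForm u v ^ (n - 1) := by
  rw [Derivation.map_smul, pderiv_pow, pderiv0_linForm, smul_eq_C_mul, smul_eq_C_mul,
    map_mul, map_mul, map_natCast]
  ring

lemma pderiv1_smul_pow (u v c : K) (n : ℕ) :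
    pderiv (1 : Fin 2) (c • linForm u v ^ n) = (c * n * v) • linForm u v ^ (n - 1) := by
  rw [Derivation.map_smul, pderiv_pow, pderiv1_linForm, smul_eq_C_mul, smul_eq_C_mul,
    map_mul, map_mul, map_natCast]
  ring

lemma op_smul_pow (a b u v c : K) (n : ℕ) :
    a • pderiv (1 : Fin 2) (c • linForm u v ^ n)
      - b • pderiv (0 : Fin 2) (c • linForm u v ^ n)
      = (c * n * (a * v - b * u)) • linForm u v ^ (n - 1) := by
  rw [pderiv0_smul_pow, pderiv1_smul_pow, smul_smul, smul_smul, ← sub_smul]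
  ring_nf

lemma linForm_pow_hom (u v : K) (n : ℕ) : (linForm u v ^ n).IsHomogeneous n := by
  have h : (linForm u v).IsHomogeneous 1 :=
    (isHomogeneous_C_mul_X u 0).add (isHomogeneous_C_mul_X v 1)
  simpa using h.pow n

lemma hom_smul {f : MvPolynomial (Fin 2) K} {n : ℕ} (c : K) (hf : f.IsHomogeneous n) :
    (c • f).IsHomogeneous n :=
  (homogeneousSubmodule (Fin 2) K n).smul_mem c hf

lemma eq_C_of_hom_zero {f : MvPolynomial (Fin 2) K} (hf : f.IsHomogeneous 0) :
    f = C (coeff 0 f) := by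
  have h := homogeneousComponent_of_mem (n := 0) (m := 0) hf
  rw [if_pos rfl] at h
  conv_lhs => rw [← h, homogeneousComponent_zero]

lemma pderiv_comm01 (f : MvPolynomial (Fin 2) K) :
    pderiv (0 : Fin 2) (pderiv (1 : Fin 2) f) = pderiv (1 : Fin 2) (pderiv (0 : Fin 2) f) := by
  induction f using MvPolynomial.induction_on' with
  | add p q hp hq => rw [map_add, map_add, hp, hq, map_add, map_add]
  | monomial s c =>
    simp only [pderiv_monomial]
    have h1 : ((s - Finsupp.single 1 1) - Finsupp.single 0 1)
        = ((s - Finsupp.single 0 1) - Finsupp.single 1 1) := by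
      ext k
      simp only [Finsupp.tsub_apply]
      omega
    have h2 : ((s - Finsupp.single (1 : Fin 2) (1 : ℕ)) : Fin 2 →₀ ℕ) 0 = s 0 := by
      rw [Finsupp.tsub_apply, Finsupp.single_eq_of_ne (by decide), Nat.sub_zero]
    have h3 : ((s - Finsupp.single (0 : Fin 2) (1 : ℕ)) : Fin 2 →₀ ℕ) 1 = s 1 := by
      rw [Finsupp.tsub_apply, Finsupp.single_eq_of_ne (by decide), Nat.sub_zero]
    rw [h1, h2, h3]
    congr 1
    ring

lemma kernel_single (a b : K) (hab : a ≠ 0 ∨ b ≠ 0) :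
    ∀ (d : ℕ) (h : MvPolynomial (Fin 2) K), h.IsHomogeneous d →
      a • pderiv (1 : Fin 2) h - b • pderiv (0 : Fin 2) h = 0 →
      ∃ c : K, h = c • linForm a b ^ d := by
  intro d
  induction d with
  | zero =>
    intro h hh _
    exact ⟨coeff 0 h, by rw [pow_zero, smul_eq_C_mul, mul_one]; exact eq_C_of_hom_zero hh⟩
  | succ e IH =>
    intro h hh heq
    have hd1 : ((e : K) + 1) ≠ 0 := by
      have : ((e + 1 : ℕ) : K) ≠ 0 := Nat.cast_ne_zero.mpr (Nat.succ_ne_zero e)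
      push_cast at this; exact this
    rcases hab with ha | hb
    · have rel0 : a • pderiv (1 : Fin 2) (pderiv (0 : Fin 2) h)
          - b • pderiv (0 : Fin 2) (pderiv (0 : Fin 2) h) = 0 := by
        have h' := congrArg (pderiv (0 : Fin 2)) heq
        rw [map_sub, Derivation.map_smul, Derivation.map_smul, pderiv_comm01, map_zero] at h'
        exact h'
      obtain ⟨c1, hc1⟩ := IH (pderiv (0 : Fin 2) h) (by simpa using hom_pderiv hh 0) rel0
      refine ⟨c1 / ((e + 1) * a), ?_⟩
      set γ := c1 / ((e + 1) * a) with hγ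
      set h' := h - γ • linForm a b ^ (e + 1) with hh'
      have hp0 : pderiv (0 : Fin 2) h' = 0 := by
        have hx : γ * ((e + 1 : ℕ) : K) * a = c1 := by
          rw [hγ]; push_cast; field_simp
        rw [hh', map_sub, pderiv0_smul_pow, hc1, Nat.add_sub_cancel, hx, sub_self]
      have hrel : a • pderiv (1 : Fin 2) h' - b • pderiv (0 : Fin 2) h' = 0 := by
        rw [hh', map_sub, map_sub, smul_sub, smul_sub]
        have hz : a • pderiv (1 : Fin 2) (γ • linForm a b ^ (e + 1))
            - b • pderiv (0 : Fin 2) (γ • linForm a b ^ (e + 1)) = 0 := by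
          rw [op_smul_pow]
          rw [show a * b - b * a = 0 by ring, mul_zero, zero_smul]
        rw [sub_sub_sub_comm, heq, hz, sub_zero]
      have hp1 : pderiv (1 : Fin 2) h' = 0 := by
        rw [hp0, smul_zero, sub_zero] at hrel
        exact (smul_eq_zero.mp hrel).resolve_left ha
      have hhom : h'.IsHomogeneous (e + 1) := hh.sub (hom_smul γ (linForm_pow_hom a b (e + 1)))
      have := eq_zero_of_pderiv hhom (Nat.succ_ne_zero e) hp0 hp1
      exact sub_eq_zero.mp (by rwa [← hh'])
    · have rel1 : a • pderiv (1 : Fin 2) (pderiv (1 : Fin 2) h)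
          - b • pderiv (0 : Fin 2) (pderiv (1 : Fin 2) h) = 0 := by
        have h' := congrArg (pderiv (1 : Fin 2)) heq
        rw [map_sub, Derivation.map_smul, Derivation.map_smul, ← pderiv_comm01, map_zero] at h'
        exact h'
      obtain ⟨c2, hc2⟩ := IH (pderiv (1 : Fin 2) h) (by simpa using hom_pderiv hh 1) rel1
      refine ⟨c2 / ((e + 1) * b), ?_⟩
      set γ := c2 / ((e + 1) * b) with hγ
      set h' := h - γ • linForm a b ^ (e + 1) with hh'
      have hp1 : pderiv (1 : Fin 2) h' = 0 := by
        have hx : γ * ((e + 1 : ℕ) : K) * b = c2 := by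
          rw [hγ]; push_cast; field_simp
        rw [hh', map_sub, pderiv1_smul_pow, hc2, Nat.add_sub_cancel, hx, sub_self]
      have hrel : a • pderiv (1 : Fin 2) h' - b • pderiv (0 : Fin 2) h' = 0 := by
        rw [hh', map_sub, map_sub, smul_sub, smul_sub]
        have hz : a • pderiv (1 : Fin 2) (γ • linForm a b ^ (e + 1))
            - b • pderiv (0 : Fin 2) (γ • linForm a b ^ (e + 1)) = 0 := by
          rw [op_smul_pow]
          rw [show a * b - b * a = 0 by ring, mul_zero, zero_smul]
        rw [sub_sub_sub_comm, heq, hz, sub_zero]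
      have hp0 : pderiv (0 : Fin 2) h' = 0 := by
        rw [hp1, smul_zero, zero_sub, neg_eq_zero] at hrel
        exact (smul_eq_zero.mp hrel).resolve_left hb
      have hhom : h'.IsHomogeneous (e + 1) := hh.sub (hom_smul γ (linForm_pow_hom a b (e + 1)))
      have := eq_zero_of_pderiv hhom (Nat.succ_ne_zero e) hp0 hp1
      exact sub_eq_zero.mp (by rwa [← hh'])

section Fold

variable {r : ℕ} (A B : Fin r → K)

/-- The fold function. -/
def F (A B : Fin r → K) : MvPolynomial (Fin 2) K → Fin r → MvPolynomial (Fin 2) K :=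
  fun g i => A i • pderiv (1 : Fin 2) g - B i • pderiv (0 : Fin 2) g

lemma foldl_zero (l : List (Fin r)) : l.foldl (F A B) 0 = 0 := by
  induction l with
  | nil => rfl
  | cons i t ih => rw [List.foldl_cons, show F A B 0 i = 0 by simp [F], ih]

lemma foldl_add (l : List (Fin r)) : ∀ g h : MvPolynomial (Fin 2) K,
    l.foldl (F A B) (g + h) = l.foldl (F A B) g + l.foldl (F A B) h := by
  induction l with
  | nil => intro g h; rfl
  | cons i t ih =>
    intro g h
    rw [List.foldl_cons, List.foldl_cons, List.foldl_cons,
      show F A B (g + h) i = F A B g i + F A B h i by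
        simp only [F, map_add, smul_add]; abel, ih]

lemma foldl_kill (j : Fin r) : ∀ (l : List (Fin r)), j ∈ l → ∀ (c : K) (k : ℕ),
    l.foldl (F A B) (c • linForm (A j) (B j) ^ k) = 0 := by
  intro l
  induction l with
  | nil => intro h; exact absurd h List.not_mem_nil
  | cons i t ih =>
    intro hmem c k
    rw [List.foldl_cons, show F A B (c • linForm (A j) (B j) ^ k) i
        = (c * k * (A i * B j - B i * A j)) • linForm (A j) (B j) ^ (k - 1) from
        op_smul_pow _ _ _ _ _ _]
    rcases List.mem_cons.mp hmem with h | h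
    · subst h
      rw [show A j * B j - B j * A j = 0 by ring, mul_zero, zero_smul, foldl_zero]
    · exact ih h _ _

lemma foldl_sum {ι : Type*} (s : Finset ι) (g : ι → MvPolynomial (Fin 2) K)
    (l : List (Fin r)) :
    l.foldl (F A B) (∑ i ∈ s, g i) = ∑ i ∈ s, l.foldl (F A B) (g i) := by
  classical
  induction s using Finset.induction_on with
  | empty => simp [foldl_zero]
  | insert _ _ hns ih =>
    rw [Finset.sum_insert hns, Finset.sum_insert hns, foldl_add, ih]

end Fold

lemma backward : ∀ (r : ℕ) (A B : Fin r → K), (∀ i, A i ≠ 0 ∨ B i ≠ 0) →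
    (∀ i j, i ≠ j → A i * B j ≠ A j * B i) →
    ∀ (d : ℕ) (f : MvPolynomial (Fin 2) K), f.IsHomogeneous d →
      (List.finRange r).foldl (F A B) f = 0 →
      ∃ α : Fin r → K, f = ∑ i, α i • linForm (A i) (B i) ^ d := by
  intro r
  induction r with
  | zero =>
    intro A B _ _ d f _ h
    refine ⟨0, ?_⟩
    simp only [List.finRange_zero, List.foldl_nil] at h
    simpa using h
  | succ r IH =>
    intro A B hne hdist d f hf h
    rw [List.finRange_succ, List.foldl_cons, List.foldl_map] at h
    cases d with
    | zero =>
      refine ⟨Fin.cons (coeff 0 f) 0, ?_⟩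
      rw [Fin.sum_univ_succ]
      simp only [Fin.cons_zero, Fin.cons_succ, Pi.zero_apply, zero_smul,
        Finset.sum_const_zero, add_zero, pow_zero, smul_eq_C_mul, mul_one]
      exact eq_C_of_hom_zero hf
    | succ e =>
      have hfold : (List.finRange r).foldl (F (A ∘ Fin.succ) (B ∘ Fin.succ)) (F A B f 0) = 0 := by
        exact h
      have hg : (F A B f 0).IsHomogeneous e := by
        have h1 : (pderiv (1 : Fin 2) f).IsHomogeneous e := by simpa using hom_pderiv hf 1
        have h0 : (pderiv (0 : Fin 2) f).IsHomogeneous e := by simpa using hom_pderiv hf 0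
        exact (hom_smul _ h1).sub (hom_smul _ h0)
      obtain ⟨β, hβ⟩ := IH (A ∘ Fin.succ) (B ∘ Fin.succ) (fun i => hne i.succ)
        (fun i j hij => hdist i.succ j.succ (fun hc => hij (Fin.succ_injective r hc)))
        e (F A B f 0) hg hfold
      set γ : Fin r → K := fun i =>
        β i / ((e + 1) * (A 0 * B i.succ - B 0 * A i.succ)) with hγ
      set f₀ : MvPolynomial (Fin 2) K :=
        ∑ i : Fin r, γ i • linForm (A i.succ) (B i.succ) ^ (e + 1) with hf₀
      have hci : ∀ i : Fin r, A 0 * B i.succ - B 0 * A i.succ ≠ 0 := by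
        intro i
        have := hdist 0 i.succ (Fin.succ_ne_zero i).symm
        intro hc
        apply this
        rw [sub_eq_zero] at hc
        rw [hc]; ring
      have hd1 : ((e : K) + 1) ≠ 0 := by
        have : ((e + 1 : ℕ) : K) ≠ 0 := Nat.cast_ne_zero.mpr (Nat.succ_ne_zero e)
        push_cast at this; exact this
      have hop : F A B f₀ 0 = F A B f 0 := by
        rw [hf₀]
        show A 0 • pderiv (1 : Fin 2) _ - B 0 • pderiv (0 : Fin 2) _ = _
        rw [map_sum (pderiv (1 : Fin 2)), map_sum (pderiv (0 : Fin 2)),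
          Finset.smul_sum, Finset.smul_sum, ← Finset.sum_sub_distrib]
        rw [hβ]
        refine Finset.sum_congr rfl fun i _ => ?_
        rw [show A 0 • pderiv (1 : Fin 2) (γ i • linForm (A i.succ) (B i.succ) ^ (e + 1))
            - B 0 • pderiv (0 : Fin 2) (γ i • linForm (A i.succ) (B i.succ) ^ (e + 1))
            = (γ i * ((e + 1 : ℕ) : K) * (A 0 * B i.succ - B 0 * A i.succ)) •
              linForm (A i.succ) (B i.succ) ^ (e + 1 - 1) from op_smul_pow _ _ _ _ _ _,
          Nat.add_sub_cancel]
        congr 1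
        have hci' : A 0 * B i.succ - B 0 * A i.succ ≠ 0 := hci i
        rw [hγ]
        push_cast
        field_simp
      have hu : F A B (f - f₀) 0 = 0 := by
        show A 0 • pderiv (1 : Fin 2) _ - B 0 • pderiv (0 : Fin 2) _ = 0
        rw [map_sub, map_sub, smul_sub, smul_sub, sub_sub_sub_comm]
        have : F A B f 0 - F A B f₀ 0 = 0 := by rw [hop, sub_self]
        exact this
      have hf₀hom : f₀.IsHomogeneous (e + 1) :=
        MvPolynomial.IsHomogeneous.sum _ _ _
          (fun i _ => hom_smul _ (linForm_pow_hom _ _ _))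
      obtain ⟨c, hc⟩ := kernel_single (A 0) (B 0) (hne 0) (e + 1) (f - f₀)
        (hf.sub hf₀hom) hu
      refine ⟨Fin.cons c γ, ?_⟩
      rw [Fin.sum_univ_succ]
      simp only [Fin.cons_zero, Fin.cons_succ]
      rw [← hf₀]
      have : f = c • linForm (A 0) (B 0) ^ (e + 1) + f₀ := by
        rw [← hc]; ring
      exact this

end ApolarAux

/-- Apolarity Lemma: for a binary form `f` of degree `d` over a field `K` of
characteristic zero and pairwise distinct (nonzero, mutually non-proportional) linear forms
`ℓ_i = A_i x + B_i y`, `f` is a `K`-linear combination of the `ℓ_i^d` iff the composition of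
the operators `ℓ_i^⊥ = −B_i ∂x + A_i ∂y` annihilates `f`. -/
theorem apolarity_lemma (K : Type) [Field K] [CharZero K] (d r : ℕ)
    (f : MvPolynomial (Fin 2) K) (hf : f.IsHomogeneous d)
    (A B : Fin r → K) (hne : ∀ i, A i ≠ 0 ∨ B i ≠ 0)
    (hdist : ∀ i j, i ≠ j → A i * B j ≠ A j * B i) :
    (∃ α : Fin r → K, f = ∑ i, α i • (linForm (A i) (B i)) ^ d) ↔
      (List.finRange r).foldl
        (fun g i => A i • pderiv (1 : Fin 2) g - B i • pderiv (0 : Fin 2) g) f = 0 := by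
  constructor
  · rintro ⟨α, rfl⟩
    rw [show (fun g i => A i • pderiv (1 : Fin 2) g - B i • pderiv (0 : Fin 2) g)
        = ApolarAux.F A B from rfl]
    rw [ApolarAux.foldl_sum]
    refine Finset.sum_eq_zero fun j _ => ?_
    exact ApolarAux.foldl_kill A B j _ (List.mem_finRange j) _ _
  · intro h
    exact ApolarAux.backward r A B hne hdist d f hf h
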